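/- For 0 < p ≤ 2, the squared Schatten p-norm is superadditive under row concatenation: if A is the vertical concatenation of X and Y, then ‖A‖_{S_p}^2 ≥ ‖X‖_{S_p}^2 + ‖Y‖_{S_p}^2. -/

import Mathlib

open Finset Matrix



/-- The Schatten `p`-norm of a real matrix `M` with `m` columns:
`(∑ i, σᵢ(M) ^ p) ^ (1/p)`, where the singular values `σᵢ(M)` are the square roots of
the eigenvalues of `MᴴM` (over `ℝ`, `Mᴴ = Mᵀ`). -/
noncomputable def schattenNorm {N : Type*} [Fintype N] {m : ℕ} (p : ℝ)
    (M : Matrix N (Fin m) ℝ) : ℝ :=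
  (∑ i, Real.sqrt ((Matrix.isHermitian_conjTranspose_mul_self M).eigenvalues i) ^ p) ^ (1 / p)

/-- For `0 < p ≤ 2`, the squared Schatten p-norm is superadditive under row concatenation:
`‖[X; Y]‖_{S_p}² ≥ ‖X‖_{S_p}² + ‖Y‖_{S_p}²`. -/

lemma jensen_rpow {ι : Type*} [Fintype ι] {q : ℝ} (hq0 : 0 < q) (hq1 : q ≤ 1)
    (w z : ι → ℝ) (hw : ∀ i, 0 ≤ w i) (hw1 : ∑ i, w i = 1) (hz : ∀ i, 0 ≤ z i) :
    ∑ i, w i * z i ^ q ≤ (∑ i, w i * z i) ^ q := by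
  have h := Real.arith_mean_le_rpow_mean Finset.univ w (fun i => z i ^ q)
    (fun i _ => hw i) hw1 (fun i _ => Real.rpow_nonneg (hz i) q) (p := 1/q)
    (by rw [le_div_iff₀ hq0]; linarith)
  have hzz : ∀ i, (z i ^ q) ^ (1/q) = z i := fun i => by
    rw [← Real.rpow_mul (hz i), mul_one_div_cancel hq0.ne', Real.rpow_one]
  simp only [hzz, one_div_one_div] at h
  exact h

lemma holder_aux {ι : Type*} [Fintype ι] {q : ℝ} (hq0 : 0 < q) (hq1 : q < 1)
    (f c : ι → ℝ) (hf : ∀ i, 0 ≤ f i) (hfc : ∀ i, f i ≤ c i) :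
    ∑ i, f i ^ q ≤ (∑ i, f i * c i ^ (q-1)) ^ q * (∑ i, c i ^ q) ^ (1-q) := by
  have hpq : (1/q).HolderConjugate (1/(1-q)) := by
    constructor
    · rw [one_div, one_div, inv_inv, inv_inv]; ring
    · positivity
    · have : 0 < 1 - q := by linarith
      positivity
  have hc : ∀ i, 0 ≤ c i := fun i => le_trans (hf i) (hfc i)
  have H := Real.inner_le_Lp_mul_Lq_of_nonneg (s := Finset.univ) hpq
    (f := fun i => f i ^ q * c i ^ (q*(q-1))) (g := fun i => c i ^ (q * (1-q)))
    (fun i _ => mul_nonneg (Real.rpow_nonneg (hf i) _) (Real.rpow_nonneg (hc i) _))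
    (fun i _ => Real.rpow_nonneg (hc i) _)
  have e1 : ∀ i, f i ^ q * c i ^ (q*(q-1)) * c i ^ (q * (1-q)) = f i ^ q := by
    intro i
    rcases eq_or_lt_of_le (hc i) with h0 | h0
    · have hfi : f i = 0 := le_antisymm (by rw [h0]; exact hfc i) (hf i)
      rw [hfi, ← h0, Real.zero_rpow hq0.ne', zero_mul, zero_mul]
    · rw [mul_assoc, ← Real.rpow_add h0]
      have : q * (q - 1) + q * (1 - q) = 0 := by ring
      rw [this, Real.rpow_zero, mul_one]
  have e2 : ∀ i, (f i ^ q * c i ^ (q*(q-1))) ^ (1/q) = f i * c i ^ (q-1) := by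
    intro i
    rw [Real.mul_rpow (Real.rpow_nonneg (hf i) _) (Real.rpow_nonneg (hc i) _),
      ← Real.rpow_mul (hf i), ← Real.rpow_mul (hc i),
      mul_one_div_cancel hq0.ne', Real.rpow_one]
    congr 1
    field_simp
  have e3 : ∀ i, (c i ^ (q*(1-q))) ^ (1/(1-q)) = c i ^ q := by
    intro i
    rw [← Real.rpow_mul (hc i)]
    congr 1
    have h1q : (1:ℝ) - q ≠ 0 := by linarith
    field_simp
  simp only [e1, e2, e3, one_div_one_div] at H
  exact H

lemma rev_minkowski {ι : Type*} [Fintype ι] {q : ℝ} (hq0 : 0 < q) (hq1 : q ≤ 1)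
    (a b : ι → ℝ) (ha : ∀ i, 0 ≤ a i) (hb : ∀ i, 0 ≤ b i) :
    (∑ i, a i ^ q) ^ (1/q) + (∑ i, b i ^ q) ^ (1/q) ≤ (∑ i, (a i + b i) ^ q) ^ (1/q) := by
  rcases eq_or_lt_of_le hq1 with rfl | hq1
  · simp [Real.rpow_one, ← Finset.sum_add_distrib]
  set c : ι → ℝ := fun i => a i + b i with hc_def
  have hc : ∀ i, 0 ≤ c i := fun i => add_nonneg (ha i) (hb i)
  set C : ℝ := ∑ i, c i ^ q with hC_def
  have hC0 : 0 ≤ C := Finset.sum_nonneg fun i _ => Real.rpow_nonneg (hc i) q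
  by_cases hC : C = 0
  · have hcz : ∀ i, c i = 0 := by
      intro i
      have h0 : c i ^ q = 0 := (Finset.sum_eq_zero_iff_of_nonneg
        (fun j _ => Real.rpow_nonneg (hc j) q)).mp hC i (Finset.mem_univ i)
      by_contra hne
      exact hne (by
        have := Real.rpow_natCast
        nlinarith [Real.rpow_pos_of_pos (lt_of_le_of_ne (hc i) (Ne.symm hne)) q, h0])
    have haz : ∀ i, a i = 0 := fun i => le_antisymm (by have := hcz i; simp only [hc_def] at this; linarith [hb i]) (ha i)
    have hbz : ∀ i, b i = 0 := fun i => le_antisymm (by have := hcz i; simp only [hc_def] at this; linarith [ha i]) (hb i)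
    simp only [haz, hbz, add_zero, Real.zero_rpow hq0.ne', Finset.sum_const, smul_zero]
    rw [Real.zero_rpow (by positivity : 1/q ≠ 0)]
    norm_num
    exact Real.rpow_nonneg hC0 _
  have hCpos : 0 < C := lt_of_le_of_ne hC0 (Ne.symm hC)
  have key : ∀ f : ι → ℝ, (∀ i, 0 ≤ f i) → (∀ i, f i ≤ c i) →
      (∑ i, f i ^ q) ^ (1/q) ≤ (∑ i, f i * c i ^ (q-1)) * C ^ ((1-q)/q) := by
    intro f hf hfc
    have h1 := holder_aux hq0 hq1 f c hf hfc
    have hS0 : 0 ≤ ∑ i, f i * c i ^ (q-1) :=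
      Finset.sum_nonneg fun i _ => mul_nonneg (hf i) (Real.rpow_nonneg (hc i) _)
    have h2 : ((∑ i, f i ^ q)) ^ (1/q) ≤
        (((∑ i, f i * c i ^ (q-1)) ^ q) * C ^ (1-q)) ^ (1/q) :=
      Real.rpow_le_rpow (Finset.sum_nonneg fun i _ => Real.rpow_nonneg (hf i) q) h1
        (by positivity)
    calc (∑ i, f i ^ q) ^ (1/q) ≤ (((∑ i, f i * c i ^ (q-1)) ^ q) * C ^ (1-q)) ^ (1/q) := h2
      _ = (∑ i, f i * c i ^ (q-1)) * C ^ ((1-q)/q) := by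
          rw [Real.mul_rpow (Real.rpow_nonneg hS0 q) (Real.rpow_nonneg hC0 _),
            ← Real.rpow_mul hS0, mul_one_div_cancel hq0.ne', Real.rpow_one,
            ← Real.rpow_mul hC0, mul_one_div]
  have hac : ∀ i, a i ≤ c i := fun i => by simp [hc_def, hb i]
  have hbc : ∀ i, b i ≤ c i := fun i => by simp [hc_def, ha i]
  have hsum : (∑ i, a i * c i ^ (q-1)) + (∑ i, b i * c i ^ (q-1)) = C := by
    rw [← Finset.sum_add_distrib]
    rw [hC_def]
    apply Finset.sum_congr rfl
    intro i _
    rcases eq_or_lt_of_le (hc i) with h0 | h0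
    · have ha0 : a i = 0 := le_antisymm (by have := hac i; rw [← h0] at this; linarith) (ha i)
      have hb0 : b i = 0 := le_antisymm (by have := hbc i; rw [← h0] at this; linarith) (hb i)
      simp only [hc_def, ha0, hb0, zero_mul, add_zero, zero_add, Real.zero_rpow hq0.ne']
    · rw [← add_mul]
      have : a i + b i = c i := rfl
      rw [this]
      nth_rewrite 1 [← Real.rpow_one (c i)]
      rw [← Real.rpow_add h0]
      norm_num
  calc (∑ i, a i ^ q) ^ (1/q) + (∑ i, b i ^ q) ^ (1/q)
      ≤ (∑ i, a i * c i ^ (q-1)) * C ^ ((1-q)/q) + (∑ i, b i * c i ^ (q-1)) * C ^ ((1-q)/q) :=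
        add_le_add (key a ha hac) (key b hb hbc)
    _ = C * C ^ ((1-q)/q) := by rw [← add_mul, hsum]
    _ = C ^ (1/q) := by
        nth_rewrite 1 [← Real.rpow_one C]
        rw [← Real.rpow_add hCpos]
        congr 1
        field_simp
        ring

lemma eig_rpow_le_diag_rpow {n : Type*} [Fintype n] [DecidableEq n] {S : Matrix n n ℝ}
    (hS : S.PosSemidef) (V : Matrix n n ℝ) (hV : V ∈ Matrix.unitaryGroup n ℝ)
    {q : ℝ} (hq0 : 0 < q) (hq1 : q ≤ 1) :
    ∑ j, hS.1.eigenvalues j ^ q ≤ ∑ i, ((star V * S * V) i i) ^ q := by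
  set W : Matrix n n ℝ := (Matrix.IsHermitian.eigenvectorUnitary hS.1 : Matrix n n ℝ) with hW_def
  set α : n → ℝ := hS.1.eigenvalues with hα_def
  have hα0 : ∀ j, 0 ≤ α j := hS.eigenvalues_nonneg
  have hspec : S = W * Matrix.diagonal (RCLike.ofReal ∘ α) * star W :=
    hS.1.spectral_theorem
  have hofReal : (RCLike.ofReal ∘ α : n → ℝ) = α := rfl
  rw [hofReal] at hspec
  have hWmem : W ∈ Matrix.unitaryGroup n ℝ :=
    (Matrix.IsHermitian.eigenvectorUnitary hS.1).2
  set Q : Matrix n n ℝ := star V * W with hQ_def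
  have hQmem : Q ∈ Matrix.unitaryGroup n ℝ := mul_mem (Unitary.star_mem hV) hWmem
  have hQ1 : Q * star Q = 1 := (Matrix.mem_unitaryGroup_iff).mp hQmem
  have hQ2 : star Q * Q = 1 := (Matrix.mem_unitaryGroup_iff').mp hQmem
  have hrow : ∀ i, ∑ j, Q i j * Q i j = 1 := by
    intro i
    have := congrArg (fun M => M i i) hQ1
    simpa [Matrix.mul_apply, Matrix.one_apply] using this
  have hcol : ∀ j, ∑ i, Q i j * Q i j = 1 := by
    intro j
    have := congrArg (fun M => M j j) hQ2
    simpa [Matrix.mul_apply, Matrix.one_apply] using this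
  have hdiag : ∀ i, (star V * S * V) i i = ∑ j, (Q i j * Q i j) * α j := by
    intro i
    have hform : star V * S * V = Q * Matrix.diagonal α * star Q := by
      rw [hspec, hQ_def, Matrix.star_mul, star_star]
      noncomm_ring
    rw [hform, Matrix.mul_apply]
    apply Finset.sum_congr rfl
    intro j _
    rw [Matrix.mul_diagonal]
    simp [Matrix.star_apply]
    ring
  calc ∑ j, α j ^ q = ∑ j, (∑ i, Q i j * Q i j) * α j ^ q := by
        apply Finset.sum_congr rfl
        intro j _
        rw [hcol j, one_mul]
    _ = ∑ j, ∑ i, (Q i j * Q i j) * α j ^ q := by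
        apply Finset.sum_congr rfl
        intro j _
        rw [Finset.sum_mul]
    _ = ∑ i, ∑ j, (Q i j * Q i j) * α j ^ q := Finset.sum_comm
    _ ≤ ∑ i, (∑ j, (Q i j * Q i j) * α j) ^ q := by
        apply Finset.sum_le_sum
        intro i _
        exact jensen_rpow hq0 hq1 (fun j => Q i j * Q i j) α
          (fun j => mul_self_nonneg _) (hrow i) hα0
    _ = ∑ i, ((star V * S * V) i i) ^ q := by
        apply Finset.sum_congr rfl
        intro i _
        rw [hdiag i]

lemma psd_diag_nonneg {n : Type*} [Fintype n] [DecidableEq n] {M : Matrix n n ℝ}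
    (hM : M.PosSemidef) (i : n) : 0 ≤ M i i := by
  exact hM.diag_nonneg

lemma schattenNorm_sq {N : Type*} [Fintype N] {m : ℕ} {p : ℝ} (hp : 0 < p)
    (M : Matrix N (Fin m) ℝ) :
    schattenNorm p M ^ (2:ℝ) =
      (∑ i, ((Matrix.isHermitian_conjTranspose_mul_self M).eigenvalues i) ^ (p/2)) ^ (1/(p/2)) := by
  have heig : ∀ i, 0 ≤ (Matrix.isHermitian_conjTranspose_mul_self M).eigenvalues i :=
    fun i => Matrix.eigenvalues_conjTranspose_mul_self_nonneg M i
  unfold schattenNorm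
  have h1 : ∀ i, Real.sqrt ((Matrix.isHermitian_conjTranspose_mul_self M).eigenvalues i) ^ p
      = ((Matrix.isHermitian_conjTranspose_mul_self M).eigenvalues i) ^ (p/2) := by
    intro i
    rw [Real.sqrt_eq_rpow, ← Real.rpow_mul (heig i), one_div, inv_mul_eq_div]
  simp only [h1]
  rw [← Real.rpow_mul (Finset.sum_nonneg fun i _ => Real.rpow_nonneg (heig i) _)]
  congr 1
  field_simp

theorem schattenNorm_sq_superadditive {n₁ n₂ m : ℕ}
    (X : Matrix (Fin n₁) (Fin m) ℝ) (Y : Matrix (Fin n₂) (Fin m) ℝ)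
    (p : ℝ) (hp0 : 0 < p) (hp2 : p ≤ 2) :
    schattenNorm p X ^ (2 : ℝ) + schattenNorm p Y ^ (2 : ℝ) ≤
      schattenNorm p (Matrix.fromRows X Y) ^ (2 : ℝ) := by
  set q : ℝ := p/2 with hq_def
  have hq0 : 0 < q := by positivity
  have hq1 : q ≤ 1 := by rw [hq_def]; linarith
  set A := Matrix.fromRows X Y with hA_def
  have hAH : Aᴴ * A = Xᴴ * X + Yᴴ * Y := by
    rw [hA_def, Matrix.conjTranspose_fromRows_eq_fromCols_conjTranspose,
      Matrix.fromCols_mul_fromRows]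
  have hH := Matrix.isHermitian_conjTranspose_mul_self A
  set μ : Fin m → ℝ := hH.eigenvalues with hμ_def
  set V : Matrix (Fin m) (Fin m) ℝ :=
    (Matrix.IsHermitian.eigenvectorUnitary hH : Matrix (Fin m) (Fin m) ℝ) with hV_def
  have hVmem : V ∈ Matrix.unitaryGroup (Fin m) ℝ :=
    (Matrix.IsHermitian.eigenvectorUnitary hH).2
  have hdiagH : star V * (Aᴴ * A) * V = Matrix.diagonal μ :=
    by have h := hH.conjStarAlgAut_star_eigenvectorUnitary
       rw [Unitary.conjStarAlgAut_apply, Unitary.coe_star, star_star] at h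
       exact h
  set a : Fin m → ℝ := fun i => (star V * (Xᴴ * X) * V) i i with ha_def
  set b : Fin m → ℝ := fun i => (star V * (Yᴴ * Y) * V) i i with hb_def
  have hab : ∀ i, a i + b i = μ i := by
    intro i
    have : star V * (Xᴴ * X) * V + star V * (Yᴴ * Y) * V = Matrix.diagonal μ := by
      rw [← hdiagH, hAH]
      noncomm_ring
    have := congrArg (fun M => M i i) this
    simpa [Matrix.diagonal_apply_eq, ha_def, hb_def] using this
  have hXpsd := Matrix.posSemidef_conjTranspose_mul_self X
  have hYpsd := Matrix.posSemidef_conjTranspose_mul_self Y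
  have hVV : (star V)ᴴ = V := by
    rw [Matrix.star_eq_conjTranspose, Matrix.conjTranspose_conjTranspose]
  have ha0 : ∀ i, 0 ≤ a i := by
    have h := hXpsd.mul_mul_conjTranspose_same (star V)
    rw [hVV] at h
    exact fun i => psd_diag_nonneg h i
  have hb0 : ∀ i, 0 ≤ b i := by
    have h := hYpsd.mul_mul_conjTranspose_same (star V)
    rw [hVV] at h
    exact fun i => psd_diag_nonneg h i
  have hμ0 : ∀ i, 0 ≤ μ i := fun i => Matrix.eigenvalues_conjTranspose_mul_self_nonneg A i
  rw [schattenNorm_sq hp0, schattenNorm_sq hp0, schattenNorm_sq hp0]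
  calc (∑ i, (Matrix.isHermitian_conjTranspose_mul_self X).eigenvalues i ^ (p/2)) ^ (1/(p/2))
        + (∑ i, (Matrix.isHermitian_conjTranspose_mul_self Y).eigenvalues i ^ (p/2)) ^ (1/(p/2))
      ≤ (∑ i, a i ^ q) ^ (1/q) + (∑ i, b i ^ q) ^ (1/q) := by
        apply add_le_add
        · exact Real.rpow_le_rpow
            (Finset.sum_nonneg fun i _ => Real.rpow_nonneg
              (Matrix.eigenvalues_conjTranspose_mul_self_nonneg X i) _)
            (eig_rpow_le_diag_rpow hXpsd V hVmem hq0 hq1) (by positivity)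
        · exact Real.rpow_le_rpow
            (Finset.sum_nonneg fun i _ => Real.rpow_nonneg
              (Matrix.eigenvalues_conjTranspose_mul_self_nonneg Y i) _)
            (eig_rpow_le_diag_rpow hYpsd V hVmem hq0 hq1) (by positivity)
    _ ≤ (∑ i, (a i + b i) ^ q) ^ (1/q) := rev_minkowski hq0 hq1 a b ha0 hb0
    _ = (∑ i, μ i ^ q) ^ (1/q) := by
        congr 1
        exact Finset.sum_congr rfl fun i _ => by rw [hab i]
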